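/- Let x₀ ∈ ℝ^d and let V : ℝ^d → ℝ be continuous with V(x₀) = 0, V(y) > 0 for all y ≠ x₀, and V(y) ≥ |y|² for all |y| ≥ R for some R > 0. Then for every ε > 0 the integral Z(ε) := ∫_{ℝ^d} e^{-V(y)/ε} dy is finite and positive, and the probability measures μ_ε(dy) := Z(ε)^{-1} e^{-V(y)/ε} dy converge weakly to the Dirac measure δ_{x₀} as ε → 0⁺; that is, for every bounded continuous f : ℝ^d → ℝ, lim_{ε→0⁺} ∫_{ℝ^d} f dμ_ε = f(x₀). -/

import Mathlib

open Filter Topology MeasureTheory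

lemma gauss_int {d : ℕ} {b : ℝ} (hb : 0 < b) :
    Integrable (fun y : EuclideanSpace ℝ (Fin d) => Real.exp (-b * ‖y‖ ^ 2)) := by
  have h := (GaussianFourier.integrable_cexp_neg_mul_sq_norm_add (V := EuclideanSpace ℝ (Fin d))
    (b := (b : ℂ)) (by simpa using hb) 0 0).norm
  refine h.congr (Filter.Eventually.of_forall fun y => ?_)
  simp [Complex.norm_exp, ← Complex.ofReal_pow]

lemma exp_int {d : ℕ} {V : EuclideanSpace ℝ (Fin d) → ℝ} (hV : Continuous V)
    (hVnn : ∀ y, 0 ≤ V y) {R : ℝ} (hR : 0 < R)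
    (hg : ∀ y : EuclideanSpace ℝ (Fin d), R ≤ ‖y‖ → ‖y‖ ^ 2 ≤ V y) {ε : ℝ} (hε : 0 < ε) :
    Integrable (fun y => Real.exp (-V y / ε)) := by
  have hdom : Integrable (fun y : EuclideanSpace ℝ (Fin d) =>
      Real.exp (-(1/ε) * ‖y‖ ^ 2) +
        (Metric.closedBall (0 : EuclideanSpace ℝ (Fin d)) R).indicator (fun _ => (1:ℝ)) y) := by
    refine (gauss_int (by positivity)).add ?_
    rw [integrable_indicator_iff measurableSet_closedBall]
    exact integrableOn_const measure_closedBall_lt_top.ne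
  refine hdom.mono' ((Real.continuous_exp.comp ((hV.neg).div_const ε)).aestronglyMeasurable)
    (Filter.Eventually.of_forall fun y => ?_)
  rw [Real.norm_eq_abs, abs_of_pos (Real.exp_pos _)]
  by_cases hy : R ≤ ‖y‖
  · have h1 : Real.exp (-V y / ε) ≤ Real.exp (-(1/ε) * ‖y‖ ^ 2) := by
      apply Real.exp_le_exp.2
      have := hg y hy
      rw [neg_mul, neg_div]
      rw [neg_le_neg_iff, one_div, inv_mul_eq_div]
      gcongr
    have h2 : (0:ℝ) ≤ (Metric.closedBall (0 : EuclideanSpace ℝ (Fin d)) R).indicator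
        (fun _ => (1:ℝ)) y := Set.indicator_nonneg (fun _ _ => zero_le_one) y
    linarith
  · have hmem : y ∈ Metric.closedBall (0 : EuclideanSpace ℝ (Fin d)) R := by
      simpa [Metric.mem_closedBall, dist_zero_right] using (le_of_not_ge hy)
    have h1 : Real.exp (-V y / ε) ≤ 1 := by
      rw [← Real.exp_zero]
      apply Real.exp_le_exp.2
      have := hVnn y
      have : -V y / ε ≤ 0 := div_nonpos_of_nonpos_of_nonneg (by linarith) hε.le
      linarith
    have h2 : (0:ℝ) ≤ Real.exp (-(1/ε) * ‖y‖ ^ 2) := (Real.exp_pos _).le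
    rw [Set.indicator_of_mem hmem]
    linarith

/-- The normalized measures `μ_ε ∝ e^{-V/ε} dy` are well defined and converge weakly
to the Dirac measure at the unique zero `x₀` of the nonnegative potential `V`. -/
theorem stmt6 {d : ℕ}
    (V : EuclideanSpace ℝ (Fin d) → ℝ) (hV : Continuous V)
    (x₀ : EuclideanSpace ℝ (Fin d))
    (hV0 : V x₀ = 0) (hVpos : ∀ y, y ≠ x₀ → 0 < V y)
    (hVgrow : ∃ R : ℝ, 0 < R ∧ ∀ y : EuclideanSpace ℝ (Fin d), R ≤ ‖y‖ → ‖y‖ ^ 2 ≤ V y) :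
    (∀ ε : ℝ, 0 < ε →
        Integrable (fun y => Real.exp (-V y / ε)) ∧
        0 < ∫ y, Real.exp (-V y / ε)) ∧
    ∀ f : EuclideanSpace ℝ (Fin d) → ℝ, Continuous f → (∃ M : ℝ, ∀ y, |f y| ≤ M) →
      Tendsto (fun ε =>
          (∫ y, f y * Real.exp (-V y / ε)) / ∫ y, Real.exp (-V y / ε))
        (𝓝[>] (0:ℝ)) (𝓝 (f x₀)) := by
  obtain ⟨R, hR, hg⟩ := hVgrow
  have hVnn : ∀ y, 0 ≤ V y := by
    intro y
    by_cases h : y = x₀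
    · simp [h, hV0]
    · exact (hVpos y h).le
  have haux : ∀ ε : ℝ, 0 < ε → Integrable (fun y => Real.exp (-V y / ε)) :=
    fun ε hε => exp_int hV hVnn hR hg hε
  have hZpos : ∀ ε : ℝ, 0 < ε → 0 < ∫ y, Real.exp (-V y / ε) := by
    intro ε hε
    rw [integral_pos_iff_support_of_nonneg (fun y => (Real.exp_pos _).le) (haux ε hε)]
    have : Function.support (fun y : EuclideanSpace ℝ (Fin d) => Real.exp (-V y / ε)) =
        Set.univ := Set.eq_univ_of_forall fun y => (Real.exp_pos _).ne'
    rw [this]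
    exact lt_of_lt_of_le (Metric.measure_ball_pos volume x₀ one_pos)
      (measure_mono (Set.subset_univ _))
  refine ⟨fun ε hε => ⟨haux ε hε, hZpos ε hε⟩, ?_⟩
  intro f hf ⟨M, hM⟩
  have hM0 : 0 ≤ M := le_trans (abs_nonneg _) (hM x₀)
  rw [Metric.tendsto_nhds]
  intro e he
  -- δ from continuity of f
  obtain ⟨δ, hδ, hδf⟩ := Metric.continuousAt_iff.mp hf.continuousAt (e/2) (half_pos he)
  -- the outside set S
  set S : Set (EuclideanSpace ℝ (Fin d)) := {y | δ ≤ dist y x₀} with hSdef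
  have hSclosed : IsClosed S :=
    isClosed_le continuous_const ((continuous_id.dist continuous_const))
  have hSmeas : MeasurableSet S := hSclosed.measurableSet
  -- positive lower bound for V on S
  obtain ⟨m, hm, hmS⟩ : ∃ m > 0, ∀ y ∈ S, m ≤ V y := by
    set K := S ∩ Metric.closedBall (0 : EuclideanSpace ℝ (Fin d)) R with hKdef
    have hKcomp : IsCompact K :=
      (isCompact_closedBall _ _).of_isClosed_subset
        (hSclosed.inter Metric.isClosed_closedBall) Set.inter_subset_right
    by_cases hK : K.Nonempty
    · obtain ⟨z, hzK, hzmin⟩ := hKcomp.exists_isMinOn hK hV.continuousOn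
      have hz0 : z ≠ x₀ := by
        intro h
        have : δ ≤ dist z x₀ := hzK.1
        rw [h, dist_self] at this
        linarith
      refine ⟨min (V z) (R ^ 2), lt_min (hVpos z hz0) (by positivity), fun y hy => ?_⟩
      by_cases hyR : ‖y‖ ≤ R
      · have : y ∈ K := ⟨hy, by simpa [Metric.mem_closedBall, dist_zero_right] using hyR⟩
        exact le_trans (min_le_left _ _) (hzmin this)
      · have h1 : R ≤ ‖y‖ := (le_of_not_ge hyR)
        have h2 : R ^ 2 ≤ ‖y‖ ^ 2 := pow_le_pow_left₀ hR.le h1 2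
        exact le_trans (min_le_right _ _) (le_trans h2 (hg y h1))
    · refine ⟨R ^ 2, by positivity, fun y hy => ?_⟩
      by_cases hyR : ‖y‖ ≤ R
      · exact absurd ⟨y, hy, by simpa [Metric.mem_closedBall, dist_zero_right] using hyR⟩ hK
      · have h1 : R ≤ ‖y‖ := (le_of_not_ge hyR)
        have h2 : R ^ 2 ≤ ‖y‖ ^ 2 := pow_le_pow_left₀ hR.le h1 2
        exact le_trans h2 (hg y h1)
  -- small ball where V ≤ m/4
  obtain ⟨r, hr, hrV⟩ : ∃ r > 0, ∀ y ∈ Metric.ball x₀ r, V y ≤ m / 4 := by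
    obtain ⟨r, hr, hrV⟩ := Metric.continuousAt_iff.mp hV.continuousAt (m/4) (by linarith)
    refine ⟨r, hr, fun y hy => ?_⟩
    have := hrV (Metric.mem_ball.mp hy)
    rw [Real.dist_eq, hV0, sub_zero] at this
    exact le_of_lt (lt_of_le_of_lt (le_abs_self _) this)
  set v : ℝ := (volume (Metric.ball x₀ r)).toReal with hvdef
  have hv : 0 < v :=
    ENNReal.toReal_pos (Metric.measure_ball_pos volume x₀ hr).ne' measure_ball_lt_top.ne
  set C : ℝ := ∫ y, Real.exp (-V y / 2) with hCdef
  have hC0 : 0 ≤ C := integral_nonneg fun y => (Real.exp_pos _).le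
  -- lower bound for Z
  have hZlow : ∀ ε : ℝ, 0 < ε → v * Real.exp (-(m/4) / ε) ≤ ∫ y, Real.exp (-V y / ε) := by
    intro ε hε
    have hind : Integrable ((Metric.ball x₀ r).indicator
        (fun _ => Real.exp (-(m/4) / ε)) : EuclideanSpace ℝ (Fin d) → ℝ) := by
      rw [integrable_indicator_iff measurableSet_ball]
      exact integrableOn_const measure_ball_lt_top.ne
    have := integral_indicator_const (μ := volume) (Real.exp (-(m/4) / ε))
      (measurableSet_ball (x := x₀) (ε := r))
    calc v * Real.exp (-(m/4) / ε)
        = ∫ y, (Metric.ball x₀ r).indicator (fun _ => Real.exp (-(m/4) / ε)) y := by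
          rw [this]; simp [hvdef, smul_eq_mul, Measure.real]
      _ ≤ ∫ y, Real.exp (-V y / ε) := by
          refine integral_mono hind (haux ε hε) fun y => ?_
          by_cases hy : y ∈ Metric.ball x₀ r
          · rw [Set.indicator_of_mem hy]
            apply Real.exp_le_exp.2
            have := hrV y hy
            rw [neg_div, neg_div, neg_le_neg_iff]
            gcongr
          · rw [Set.indicator_of_notMem hy]
            exact (Real.exp_pos _).le
  -- upper bound for the outside integral
  have hout : ∀ ε : ℝ, 0 < ε → ε ≤ 1 →
      ∫ y, S.indicator (fun z => Real.exp (-V z / ε)) y ≤ Real.exp (-(m/2) / ε) * C := by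
    intro ε hε hε1
    calc ∫ y, S.indicator (fun z => Real.exp (-V z / ε)) y
        ≤ ∫ y, Real.exp (-(m/2) / ε) * Real.exp (-V y / 2) := by
          refine integral_mono ((haux ε hε).indicator hSmeas)
            ((exp_int hV hVnn hR hg two_pos).const_mul _) fun y => ?_
          by_cases hy : y ∈ S
          · rw [Set.indicator_of_mem hy, ← Real.exp_add]
            apply Real.exp_le_exp.2
            have hVy := hmS y hy
            have key : -V y ≤ -(m/2) - ε * (V y / 2) := by nlinarith [hVnn y]
            calc -V y / ε ≤ (-(m/2) - ε * (V y / 2)) / ε := by gcongr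
              _ = -(m/2) / ε + -V y / 2 := by field_simp; ring
          · rw [Set.indicator_of_notMem hy]
            positivity
      _ = Real.exp (-(m/2) / ε) * C := by rw [integral_const_mul _ _]
  -- the tail term tends to 0
  have htail : Tendsto (fun ε : ℝ => (2 * M * C / v) * Real.exp (-(m/4) / ε))
      (𝓝[>] (0:ℝ)) (𝓝 0) := by
    have h1 : Tendsto (fun ε : ℝ => (m/4) * ε⁻¹) (𝓝[>] (0:ℝ)) atTop :=
      Tendsto.const_mul_atTop (by positivity) tendsto_inv_nhdsGT_zero
    have h2 : Tendsto (fun ε : ℝ => Real.exp (-((m/4) * ε⁻¹))) (𝓝[>] (0:ℝ)) (𝓝 0) :=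
      Real.tendsto_exp_neg_atTop_nhds_zero.comp h1
    have h3 := h2.const_mul (2 * M * C / v)
    rw [mul_zero] at h3
    refine h3.congr fun ε => ?_
    have : m / 4 * ε⁻¹ = m / 4 / ε := (div_eq_mul_inv _ _).symm
    rw [this, neg_div]
  filter_upwards [self_mem_nhdsWithin,
    Ioo_mem_nhdsGT_of_mem (Set.mem_Ico.mpr ⟨le_refl (0:ℝ), zero_lt_one⟩),
    htail.eventually (gt_mem_nhds (half_pos he))] with ε hε' hε1' htε
  have hε : 0 < ε := hε'
  have hε1 : ε ≤ 1 := (hε1'.2).le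
  set Z : ℝ := ∫ y, Real.exp (-V y / ε) with hZdef
  have hZ : 0 < Z := hZpos ε hε
  have hIf : Integrable (fun y => f y * Real.exp (-V y / ε)) :=
    (haux ε hε).bdd_mul hf.aestronglyMeasurable (c := M) (Filter.Eventually.of_forall fun y => by simpa using hM y)
  have hIabs : Integrable (fun y => |f y - f x₀| * Real.exp (-V y / ε)) :=
    (haux ε hε).bdd_mul ((hf.sub continuous_const).abs).aestronglyMeasurable
      (c := 2 * M) (Filter.Eventually.of_forall fun y => by
        rw [Real.norm_eq_abs, abs_abs]
        calc |f y - f x₀| ≤ |f y| + |f x₀| := abs_sub _ _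
          _ ≤ M + M := add_le_add (hM y) (hM x₀)
          _ = 2 * M := by ring)
  have hnum_eq : (∫ y, f y * Real.exp (-V y / ε)) / Z - f x₀ =
      (∫ y, (f y - f x₀) * Real.exp (-V y / ε)) / Z := by
    rw [show (fun y => (f y - f x₀) * Real.exp (-V y / ε)) =
        (fun y => f y * Real.exp (-V y / ε) - f x₀ * Real.exp (-V y / ε)) from
        funext fun y => by ring,
      integral_sub hIf ((haux ε hε).const_mul (f x₀)), integral_const_mul,
      sub_div, mul_div_assoc, div_self hZ.ne', mul_one]
  have hsplit : ∫ y, |f y - f x₀| * Real.exp (-V y / ε) ≤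
      e/2 * Z + 2 * M * (Real.exp (-(m/2) / ε) * C) := by
    have hIrhs : Integrable (fun y => e/2 * Real.exp (-V y / ε) +
        2 * M * S.indicator (fun z => Real.exp (-V z / ε)) y) :=
      ((haux ε hε).const_mul _).add (((haux ε hε).indicator hSmeas).const_mul _)
    calc ∫ y, |f y - f x₀| * Real.exp (-V y / ε)
        ≤ ∫ y, (e/2 * Real.exp (-V y / ε) +
            2 * M * S.indicator (fun z => Real.exp (-V z / ε)) y) := by
          refine integral_mono hIabs hIrhs fun y => ?_
          by_cases hy : y ∈ S
          · rw [Set.indicator_of_mem hy]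
            have h1 : |f y - f x₀| ≤ 2 * M := by
              calc |f y - f x₀| ≤ |f y| + |f x₀| := abs_sub _ _
                _ ≤ M + M := add_le_add (hM y) (hM x₀)
                _ = 2 * M := by ring
            nlinarith [Real.exp_pos (-V y / ε), he]
          · rw [Set.indicator_of_notMem hy]
            have hdy : dist y x₀ < δ := lt_of_not_ge hy
            have h1 : |f y - f x₀| ≤ e/2 := by
              have := hδf hdy
              rw [Real.dist_eq] at this
              exact this.le
            nlinarith [Real.exp_pos (-V y / ε)]
      _ = e/2 * Z + 2 * M * ∫ y, S.indicator (fun z => Real.exp (-V z / ε)) y := by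
          rw [integral_add ((haux ε hε).const_mul _)
            (((haux ε hε).indicator hSmeas).const_mul _), integral_const_mul,
            integral_const_mul]
      _ ≤ e/2 * Z + 2 * M * (Real.exp (-(m/2) / ε) * C) := by
          gcongr
          exact hout ε hε hε1
  rw [Real.dist_eq, hnum_eq, abs_div, abs_of_pos hZ]
  have habs : |∫ y, (f y - f x₀) * Real.exp (-V y / ε)| ≤
      ∫ y, |f y - f x₀| * Real.exp (-V y / ε) := by
    have := norm_integral_le_integral_norm (μ := volume)
      (fun y : EuclideanSpace ℝ (Fin d) => (f y - f x₀) * Real.exp (-V y / ε))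
    simpa [Real.norm_eq_abs] using this
  have hexp_split : Real.exp (-(m/2) / ε) =
      Real.exp (-(m/4) / ε) * Real.exp (-(m/4) / ε) := by
    rw [← Real.exp_add]
    congr 1
    ring
  calc |∫ y, (f y - f x₀) * Real.exp (-V y / ε)| / Z
      ≤ (e/2 * Z + 2 * M * (Real.exp (-(m/2) / ε) * C)) / Z := by
        gcongr
        exact le_trans habs hsplit
    _ = e/2 + (2 * M * (Real.exp (-(m/2) / ε) * C)) / Z := by
        rw [add_div, mul_div_assoc, div_self hZ.ne', mul_one]
    _ ≤ e/2 + (2 * M * (Real.exp (-(m/2) / ε) * C)) / (v * Real.exp (-(m/4) / ε)) := by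
        refine add_le_add_right (div_le_div_of_nonneg_left ?_ (by positivity) (hZlow ε hε)) _
        exact mul_nonneg (by linarith) (mul_nonneg (Real.exp_pos _).le hC0)
    _ = e/2 + (2 * M * C / v) * Real.exp (-(m/4) / ε) := by
        rw [hexp_split]
        field_simp
    _ < e/2 + e/2 := by linarith [htε]
    _ = e := add_halves e
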